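/- For the complete graph K_{n+1} on vertex set {0,1,...,n} with all edge weights equal to 1 and root 0, the set of G-parking functions equals the set of classical parking functions of length n. -/
import Mathlib


/-- For a multigraph on `{0,…,n}` encoded by a symmetric weight function `wt`
(root `0`, nonroot vertex `i : Fin n` is `i.succ`), `dU wt U i` is the total
weight of edges from `i` to vertices outside `U`. -/
def dU (n : ℕ) (wt : Fin (n + 1) → Fin (n + 1) → ℕ) (U : Finset (Fin n)) (i : Fin n) : ℕ :=
  ∑ j ∈ (U.image Fin.succ)ᶜ, wt i.succ j

/-- `b` is a `G`-parking function: every nonempty set `U` of nonroot vertices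
contains `i` with `b i < dU wt U i`. -/
def IsGPF (n : ℕ) (wt : Fin (n + 1) → Fin (n + 1) → ℕ) (b : Fin n → ℕ) : Prop :=
  ∀ U : Finset (Fin n), U.Nonempty → ∃ i ∈ U, b i < dU n wt U i

/-- `b` is a maximal `G`-parking function (w.r.t. the coordinatewise order). -/
def IsMaxGPF (n : ℕ) (wt : Fin (n + 1) → Fin (n + 1) → ℕ) (b : Fin n → ℕ) : Prop :=
  IsGPF n wt b ∧ ∀ c : Fin n → ℕ, IsGPF n wt c → b ≤ c → c = b

/-- `a` is a classical parking function of length `n`. -/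
def IsPF (n : ℕ) (a : Fin n → ℕ) : Prop :=
  ∃ σ : Equiv.Perm (Fin n), Monotone (a ∘ ⇑σ) ∧ ∀ i : Fin n, a (σ i) < (i : ℕ) + 1

lemma dU_complete (n : ℕ) (U : Finset (Fin n)) (i : Fin n) (hi : i ∈ U) :
    dU n (fun i j => if i = j then 0 else 1) U i = n + 1 - U.card := by
  unfold dU
  have h1 : ∀ j ∈ (U.image Fin.succ)ᶜ, (if i.succ = j then (0:ℕ) else 1) = 1 := by
    intro j hj
    rw [if_neg]
    rintro rfl
    exact (Finset.mem_compl.mp hj) (Finset.mem_image_of_mem _ hi)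
  rw [Finset.sum_congr rfl h1, Finset.sum_const, smul_eq_mul, mul_one,
    Finset.card_compl, Finset.card_image_of_injective _ (Fin.succ_injective n)]
  simp

lemma card_filter_perm (n : ℕ) (b : Fin n → ℕ) (σ : Equiv.Perm (Fin n)) (k : ℕ) :
    (Finset.univ.filter (fun j : Fin n => b j < k)).card
      = (Finset.univ.filter (fun j : Fin n => b (σ j) < k)).card := by
  apply Finset.card_bij' (fun j _ => σ.symm j) (fun j _ => σ j)
  · intro j hj; simp at hj ⊢; simpa using hj
  · intro j hj; simp at hj ⊢; exact hj
  · intro j _; simp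
  · intro j _; simp

lemma card_filter_lt (n k : ℕ) (hk : k ≤ n) :
    (Finset.univ.filter (fun j : Fin n => (j : ℕ) < k)).card = k := by
  have h : (Finset.univ.filter (fun j : Fin n => (j : ℕ) < k)).card = (Finset.range k).card := by
    apply Finset.card_bij' (fun (j : Fin n) _ => (j : ℕ))
      (fun m hm => ⟨m, lt_of_lt_of_le (Finset.mem_range.mp hm) hk⟩)
    all_goals (intros; simp_all) <;> exact Finset.mem_range.mp ‹_›
  simpa using h

lemma count_cond_iff_gpf (n : ℕ) (b : Fin n → ℕ) :
    IsGPF n (fun i j => if i = j then 0 else 1) b ↔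
      ∀ k, 1 ≤ k → k ≤ n → k ≤ (Finset.univ.filter (fun i => b i < k)).card := by
  constructor
  · intro h k hk1 hkn
    by_contra hc
    push_neg at hc
    set U := Finset.univ.filter (fun i => k ≤ b i) with hU
    have hsum : (Finset.univ.filter (fun i => b i < k)).card + U.card = n := by
      rw [hU]
      have := Finset.card_filter_add_card_filter_not
        (s := (Finset.univ : Finset (Fin n))) (p := fun i => b i < k)
      simp only [not_lt, Finset.card_univ, Fintype.card_fin] at this
      exact this
    have hne : U.Nonempty := by
      rw [← Finset.card_pos]; omega
    obtain ⟨i, hiU, hlt⟩ := h U hne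
    rw [dU_complete n U i hiU] at hlt
    have hik : k ≤ b i := (Finset.mem_filter.mp hiU).2
    omega
  · intro h U hne
    have hm1 : 1 ≤ U.card := Finset.card_pos.mpr hne
    have hmn : U.card ≤ n := by
      simpa using Finset.card_le_card (Finset.subset_univ U)
    set k := n + 1 - U.card with hk
    have hcount := h k (by omega) (by omega)
    have hUc : Uᶜ.card = n - U.card := by
      rw [Finset.card_compl]; simp
    have : ¬ (Finset.univ.filter (fun i => b i < k)) ⊆ Uᶜ := by
      intro hsub
      have := Finset.card_le_card hsub
      omega
    obtain ⟨i, hif, hiU⟩ := Finset.not_subset.mp this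
    refine ⟨i, by simpa using hiU, ?_⟩
    rw [dU_complete n U i (by simpa using hiU)]
    exact (Finset.mem_filter.mp hif).2

/-- For the complete graph `K_{n+1}` with all edge weights `1` and root `0`,
the `G`-parking functions are exactly the classical parking functions. -/
theorem gParking_complete_eq_classical (n : ℕ) (b : Fin n → ℕ) :
    IsGPF n (fun i j => if i = j then 0 else 1) b ↔ IsPF n b := by
  rw [count_cond_iff_gpf]
  constructor
  · intro h
    refine ⟨Tuple.sort b, Tuple.monotone_sort b, ?_⟩
    intro i
    by_contra hc
    push_neg at hc
    have hmono := Tuple.monotone_sort b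
    set σ := Tuple.sort b
    have hk : (i : ℕ) + 1 ≤ n := i.isLt
    have hcount := h ((i : ℕ) + 1) (by omega) hk
    rw [card_filter_perm n b σ ((i : ℕ) + 1)] at hcount
    have hsub : (Finset.univ.filter (fun j : Fin n => b (σ j) < (i : ℕ) + 1))
        ⊆ Finset.univ.filter (fun j : Fin n => (j : ℕ) < (i : ℕ)) := by
      intro j hj
      simp only [Finset.mem_filter, Finset.mem_univ, true_and] at hj ⊢
      by_contra hji
      push_neg at hji
      have : b (σ i) ≤ b (σ j) := hmono (by exact_mod_cast hji)
      omega
    have := Finset.card_le_card hsub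
    rw [card_filter_lt n i (le_of_lt i.isLt)] at this
    omega
  · rintro ⟨σ, hmono, hlt⟩ k hk1 hkn
    rw [card_filter_perm n b σ k]
    have hsub : (Finset.univ.filter (fun j : Fin n => (j : ℕ) < k))
        ⊆ Finset.univ.filter (fun j : Fin n => b (σ j) < k) := by
      intro j hj
      simp only [Finset.mem_filter, Finset.mem_univ, true_and] at hj ⊢
      have := hlt j
      omega
    have := Finset.card_le_card hsub
    rwa [card_filter_lt n k hkn] at this
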